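/- arXiv:1509.07019 — 2 statements merged into one kernel-verified Lean document; each statement's English description precedes it below -/
import Mathlib

section
/- Let α = 1, m = ⌊βn⌋, and for i ≥ 2 set p_i' = γ W_i' n^{-1} where W_i' = W_i·1{W_i ≤ n^{1/4}} are truncated i.i.d. weights with E[W_i] = 1, and let N be binomial with parameters m and p_1 = min(γ W_1 n^{-1}, 1) independent of the W_i' given W_1. Then for every t ∈ [0,1], E[e^{(t−1)N Σ_{i=2}^n p_i'} | W_1] → exp(βγW_1(e^{γ(t−1)} − 1)) as n → ∞, the generating function of a compound Poisson distribution: a Poisson(βγW_1) sum of independent Poisson(γ) variables. -/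
open MeasureTheory ProbabilityTheory Filter Real

noncomputable section

/-- Bernoulli measure on `Bool` with success probability `p` (clamped into `[0,1]`). -/
def bern (p : ℝ) : Measure Bool :=
  (PMF.bernoulli (Real.toNNReal (min p 1))
    (Real.toNNReal_le_one.mpr (min_le_right _ _))).toMeasure

instance bern.isProbabilityMeasure (p : ℝ) : IsProbabilityMeasure (bern p) := by
  unfold bern; infer_instance

/-- The (conditional) law of the bipartite graph `B(n,m,·)` given the group-membership
probabilities `p i` of the `n` vertices: vertex `i` is joined to each of the `m` groups
independently with probability `p i`. -/
def bipLaw (n m : ℕ) (p : Fin n → ℝ) : Measure (Fin n → Fin m → Bool) :=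
  Measure.pi fun i => Measure.pi fun _ : Fin m => bern (p i)

instance bipLaw.isProbabilityMeasure (n m : ℕ) (p : Fin n → ℝ) :
    IsProbabilityMeasure (bipLaw n m p) := by
  unfold bipLaw; infer_instance

/-- The number of groups, `m = ⌊β n^α⌋`. -/
def numGroups (β α : ℝ) (n : ℕ) : ℕ := ⌊β * (n : ℝ) ^ α⌋₊

/-- The group-membership probability `p_i = min(γ w n^{-(1+α)/2}, 1)` of a vertex
with weight `w`. -/
def pw (γ α : ℝ) (n : ℕ) (w : ℝ) : ℝ := min (γ * w * (n : ℝ) ^ (-(1 + α) / 2)) 1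

/-- Two distinct vertices are adjacent in the random intersection graph iff they share
at least one group in the bipartite graph. -/
def Adj {n m : ℕ} (B : Fin n → Fin m → Bool) (i j : Fin n) : Prop :=
  ∃ a : Fin m, B i a ∧ B j a

/-- The degree of vertex `i` in the random intersection graph determined by the
bipartite graph `B`. -/
def deg {n m : ℕ} (B : Fin n → Fin m → Bool) (i : Fin n) : ℕ :=
  Set.ncard {j | j ≠ i ∧ Adj B i j}

/-- The truncated weight `W' = W·1{W ≤ n^{1/4}}`. -/
def trunc (n : ℕ) (x : ℝ) : ℝ := if x ≤ (n : ℝ) ^ ((1 : ℝ) / 4) then x else 0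

/-- The generating-function expectation `E[e^{(t-1) N Σ_{i=2}^n p_i'} | W_1 = w]`, where,
conditionally on `W_1 = w`, the variable `N` is binomial with parameters `m = ⌊β n^α⌋`
and `p_1 = min(γ w n^{-(1+α)/2}, 1)`, independent of the i.i.d. weights `W_2, …, W_n`
with law `F`, and `p_i' = γ W_i' n^{-(1+α)/2}` with `W_i' = W_i·1{W_i ≤ n^{1/4}}`. -/
def genFun (α β γ : ℝ) (F : Measure ℝ) (n : ℕ) (w : ℝ) (t : ℝ) : ℝ :=
  ∫ x : Fin (numGroups β α n + 1) × (Fin (n - 1) → ℝ),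
      Real.exp ((t - 1) * ((x.1 : ℕ) : ℝ) *
        ∑ i : Fin (n - 1), γ * trunc n (x.2 i) * (n : ℝ) ^ (-(1 + α) / 2))
    ∂ ((PMF.binomial (Real.toNNReal (pw γ α n w))
          (Real.toNNReal_le_one.mpr (min_le_right _ _)) (numGroups β α n)).toMeasure.prod
        (Measure.pi fun _ : Fin (n - 1) => F))

namespace GFAux
open Topology
set_option linter.unusedVariables false
set_option linter.unusedSectionVars false
set_option linter.unnecessarySimpa false

/-- Single-coordinate factor integral. -/
def phi (F : Measure ℝ) (n : ℕ) (c : ℝ) : ℝ := ∫ x, Real.exp (c * trunc n x) ∂F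

/-- Mean of the truncated weight. -/
def en (F : Measure ℝ) (n : ℕ) : ℝ := ∫ x, trunc n x ∂F

/-- The per-coordinate exponent coefficient. -/
def cc (γ t : ℝ) (n k : ℕ) : ℝ := (t - 1) * k * γ * (n : ℝ)⁻¹

/-- The `k`-th summand of the generating function. -/
def A (β γ : ℝ) (F : Measure ℝ) (w t : ℝ) (n k : ℕ) : ℝ :=
  if k ≤ numGroups β 1 n then
    ((numGroups β 1 n).choose k : ℝ) * pw γ 1 n w ^ k *
      (1 - pw γ 1 n w) ^ (numGroups β 1 n - k) * phi F n (cc γ t n k) ^ (n - 1)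
  else 0

lemma measurable_trunc (n : ℕ) : Measurable (trunc n) := by
  unfold trunc
  exact Measurable.ite (measurableSet_le measurable_id measurable_const)
    measurable_id measurable_const

lemma trunc_nonneg {n : ℕ} {x : ℝ} (hx : 0 ≤ x) : 0 ≤ trunc n x := by
  unfold trunc; split <;> simp [hx]

lemma trunc_le_self {n : ℕ} {x : ℝ} (hx : 0 ≤ x) : trunc n x ≤ x := by
  unfold trunc; split <;> simp [hx]

lemma trunc_le_bound {n : ℕ} {x : ℝ} (hx : 0 ≤ x) :
    trunc n x ≤ (n : ℝ) ^ ((1 : ℝ) / 4) := by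
  unfold trunc; split
  · assumption
  · positivity

lemma abs_trunc_le {n : ℕ} (x : ℝ) : |trunc n x| ≤ |x| := by
  unfold trunc; split
  · exact le_rfl
  · simpa using abs_nonneg x

lemma cc_nonpos {γ t : ℝ} (hγ : 0 < γ) (ht1 : t ≤ 1) (n k : ℕ) : cc γ t n k ≤ 0 := by
  unfold cc
  have h1 : (t - 1) * k ≤ 0 := mul_nonpos_of_nonpos_of_nonneg (by linarith) (by positivity)
  have h2 : (t - 1) * k * γ ≤ 0 := mul_nonpos_of_nonpos_of_nonneg h1 hγ.le
  exact mul_nonpos_of_nonpos_of_nonneg h2 (by positivity)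

section F
variable {F : Measure ℝ} [IsProbabilityMeasure F]

lemma ae_pos (hFpos : F (Set.Iic 0) = 0) : ∀ᵐ x ∂F, 0 < x := by
  rw [ae_iff]
  convert hFpos using 2
  ext x; simp [not_lt]

lemma integrable_trunc (hFpos : F (Set.Iic 0) = 0)
    (hFint : Integrable (fun x => x) F) (n : ℕ) :
    Integrable (fun x => trunc n x) F := by
  refine Integrable.mono' hFint.abs ((measurable_trunc n).aestronglyMeasurable) ?_
  exact Filter.Eventually.of_forall fun x => by
    simpa [Real.norm_eq_abs] using abs_trunc_le (n := n) x

lemma en_nonneg (hFpos : F (Set.Iic 0) = 0) (n : ℕ) : 0 ≤ en F n := by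
  refine integral_nonneg_of_ae ?_
  exact (ae_pos hFpos).mono fun x hx => trunc_nonneg hx.le

lemma en_le_one (hFpos : F (Set.Iic 0) = 0)
    (hFint : Integrable (fun x => x) F) (hFmean : ∫ x, x ∂F = 1) (n : ℕ) :
    en F n ≤ 1 := by
  rw [← hFmean]
  refine integral_mono_ae (integrable_trunc hFpos hFint n) hFint ?_
  exact (ae_pos hFpos).mono fun x hx => trunc_le_self hx.le

lemma en_tendsto (hFint : Integrable (fun x => x) F) (hFmean : ∫ x, x ∂F = 1) :
    Tendsto (fun n => en F n) atTop (𝓝 1) := by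
  rw [← hFmean]
  refine tendsto_integral_of_dominated_convergence (fun x => |x|)
    (fun n => (measurable_trunc n).aestronglyMeasurable) hFint.abs
    (fun n => Filter.Eventually.of_forall fun x => by
      simpa [Real.norm_eq_abs] using abs_trunc_le (n := n) x) ?_
  refine Filter.Eventually.of_forall fun x => ?_
  have hpow : Tendsto (fun n : ℕ => (n : ℝ) ^ ((1 : ℝ) / 4)) atTop atTop :=
    (tendsto_rpow_atTop (by norm_num)).comp tendsto_natCast_atTop_atTop
  refine tendsto_const_nhds.congr' ?_
  filter_upwards [hpow.eventually_ge_atTop x] with n hn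
  exact (if_pos hn).symm

lemma integrable_exp_trunc (hFpos : F (Set.Iic 0) = 0) {n : ℕ} {c : ℝ} (hc : c ≤ 0) :
    Integrable (fun x => Real.exp (c * trunc n x)) F := by
  refine Integrable.mono' (integrable_const 1)
    ((Real.measurable_exp.comp ((measurable_trunc n).const_mul c)).aestronglyMeasurable) ?_
  refine (ae_pos hFpos).mono fun x hx => ?_
  rw [Real.norm_eq_abs, abs_of_nonneg (Real.exp_nonneg _)]
  exact Real.exp_le_one_iff.mpr (mul_nonpos_of_nonpos_of_nonneg hc (trunc_nonneg hx.le))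

lemma phi_nonneg (n : ℕ) (c : ℝ) : 0 ≤ phi F n c :=
  integral_nonneg fun x => (Real.exp_nonneg _)

lemma phi_le_one (hFpos : F (Set.Iic 0) = 0) {n : ℕ} {c : ℝ} (hc : c ≤ 0) :
    phi F n c ≤ 1 := by
  have h := integral_mono_ae (μ := F) (g := fun _ => (1:ℝ)) (integrable_exp_trunc (n := n) hFpos hc) (integrable_const 1)
    ((ae_pos hFpos).mono fun x hx =>
      Real.exp_le_one_iff.mpr (mul_nonpos_of_nonpos_of_nonneg hc (trunc_nonneg hx.le)))
  simpa [phi] using h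

lemma phi_lower (hFpos : F (Set.Iic 0) = 0) (hFint : Integrable (fun x => x) F)
    {n : ℕ} {c : ℝ} (hc : c ≤ 0) :
    1 + c * en F n ≤ phi F n c := by
  have hint : Integrable (fun x => 1 + c * trunc n x) F :=
    (integrable_const 1).add ((integrable_trunc hFpos hFint n).const_mul c)
  have h := integral_mono_ae (μ := F) hint (integrable_exp_trunc (n := n) hFpos hc)
    (Filter.Eventually.of_forall fun x => by
      show 1 + c * trunc n x ≤ Real.exp (c * trunc n x)
      have := Real.add_one_le_exp (c * trunc n x); linarith)
  rw [integral_add (integrable_const 1) ((integrable_trunc hFpos hFint n).const_mul c),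
    integral_const_mul] at h
  simpa [phi, en] using h

lemma phi_upper (hFpos : F (Set.Iic 0) = 0) (hFint : Integrable (fun x => x) F)
    {n : ℕ} {c : ℝ} (hc : c ≤ 0) (hcb : |c| * (n : ℝ) ^ ((1 : ℝ) / 4) ≤ 1) :
    phi F n c ≤ 1 + c * en F n + c ^ 2 * (n : ℝ) ^ ((1 : ℝ) / 4) * en F n := by
  have hintt := integrable_trunc hFpos hFint n
  have hint : Integrable (fun x => 1 + c * trunc n x
      + c ^ 2 * (n : ℝ) ^ ((1 : ℝ) / 4) * trunc n x) F :=
    ((integrable_const 1).add (hintt.const_mul c)).add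
      (hintt.const_mul (c ^ 2 * (n : ℝ) ^ ((1 : ℝ) / 4)))
  have h := integral_mono_ae (μ := F) (integrable_exp_trunc (n := n) hFpos hc) hint
    ((ae_pos hFpos).mono fun x hx => ?_)
  · have hRHS : ∫ x, (1 + c * trunc n x + c ^ 2 * (n : ℝ) ^ ((1 : ℝ) / 4) * trunc n x) ∂F
        = 1 + c * en F n + c ^ 2 * (n : ℝ) ^ ((1 : ℝ) / 4) * en F n := by
      have hi1 : Integrable (fun x => 1 + c * trunc n x) F :=
        (integrable_const 1).add (hintt.const_mul c)
      have hi2 : Integrable (fun x => c ^ 2 * (n : ℝ) ^ ((1 : ℝ) / 4) * trunc n x) F :=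
        hintt.const_mul _
      rw [integral_add hi1 hi2, integral_add (integrable_const 1) (hintt.const_mul c),
        integral_const_mul, integral_const_mul]
      simp [en]
    show phi F n c ≤ _
    unfold phi
    exact h.trans hRHS.le
  · show Real.exp (c * trunc n x) ≤ 1 + c * trunc n x
        + c ^ 2 * (n : ℝ) ^ ((1 : ℝ) / 4) * trunc n x
    have htr0 : 0 ≤ trunc n x := trunc_nonneg hx.le
    have htrb : trunc n x ≤ (n : ℝ) ^ ((1 : ℝ) / 4) := trunc_le_bound hx.le
    have habs : |c * trunc n x| ≤ 1 := by
      rw [abs_mul, abs_of_nonneg htr0]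
      calc |c| * trunc n x ≤ |c| * (n : ℝ) ^ ((1 : ℝ) / 4) := by
            exact mul_le_mul_of_nonneg_left htrb (abs_nonneg c)
        _ ≤ 1 := hcb
    have hkey := Real.abs_exp_sub_one_sub_id_le habs
    have h1 : Real.exp (c * trunc n x) ≤ 1 + c * trunc n x + (c * trunc n x) ^ 2 := by
      have := abs_le.mp hkey
      nlinarith [this.2]
    have h2 : (c * trunc n x) ^ 2 ≤ c ^ 2 * (n : ℝ) ^ ((1 : ℝ) / 4) * trunc n x := by
      have : trunc n x * trunc n x ≤ (n : ℝ) ^ ((1 : ℝ) / 4) * trunc n x :=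
        mul_le_mul_of_nonneg_right htrb htr0
      nlinarith [sq_nonneg c]
    linarith

end F
end GFAux
namespace GFAux
open Topology
set_option linter.unusedVariables false
set_option linter.unusedSectionVars false

lemma aux_pow_exp {z : ℕ → ℝ} {N : ℕ → ℕ} {L : ℝ}
    (hz01 : ∀ᶠ n in atTop, 0 < z n ∧ z n ≠ 1)
    (hz : Tendsto z atTop (𝓝 1))
    (hmul : Tendsto (fun n => (N n : ℝ) * (z n - 1)) atTop (𝓝 L)) :
    Tendsto (fun n => z n ^ N n) atTop (𝓝 (Real.exp L)) := by
  have hslope : Tendsto (fun y : ℝ => Real.log y / (y - 1)) (𝓝[≠] 1) (𝓝 1) := by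
    have h := hasDerivAt_iff_tendsto_slope.mp (Real.hasDerivAt_log one_ne_zero)
    simp only [inv_one] at h
    exact h.congr fun y => by rw [slope_def_field, Real.log_one, sub_zero]
  have hcomp : Tendsto (fun n => Real.log (z n) / (z n - 1)) atTop (𝓝 1) :=
    hslope.comp (tendsto_nhdsWithin_iff.mpr ⟨hz, hz01.mono fun n h => h.2⟩)
  have hNlog : Tendsto (fun n => (N n : ℝ) * Real.log (z n)) atTop (𝓝 (L * 1)) := by
    refine (hmul.mul hcomp).congr' ?_
    filter_upwards [hz01] with n hn
    have h1 : z n - 1 ≠ 0 := sub_ne_zero.mpr hn.2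
    field_simp
  have hexp := (Real.continuous_exp.tendsto (L * 1)).comp hNlog
  rw [mul_one] at hexp
  refine hexp.congr' ?_
  filter_upwards [hz01] with n hn
  show Real.exp ((N n : ℝ) * Real.log (z n)) = z n ^ N n
  rw [Real.exp_nat_mul, Real.exp_log hn.1]

lemma tendsto_inv_nat : Tendsto (fun n : ℕ => (n : ℝ)⁻¹) atTop (𝓝 0) :=
  tendsto_inv_atTop_zero.comp tendsto_natCast_atTop_atTop

lemma L_ratio : Tendsto (fun n : ℕ => ((n - 1 : ℕ) : ℝ) * (n : ℝ)⁻¹) atTop (𝓝 1) := by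
  have h : Tendsto (fun n : ℕ => 1 - (n : ℝ)⁻¹) atTop (𝓝 1) := by
    simpa using tendsto_const_nhds.sub tendsto_inv_nat
  refine h.congr' ?_
  filter_upwards [eventually_ge_atTop 1] with n hn
  have hn0 : (n : ℝ) ≠ 0 := by positivity
  rw [Nat.cast_sub hn]
  push_cast
  field_simp

lemma L_q : Tendsto (fun n : ℕ => (n : ℝ) ^ ((1 : ℝ) / 4) * (n : ℝ)⁻¹) atTop (𝓝 0) := by
  have h : Tendsto (fun n : ℕ => (n : ℝ) ^ (-(3 : ℝ) / 4)) atTop (𝓝 0) := by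
    have := (tendsto_rpow_neg_atTop (y := (3 : ℝ) / 4) (by norm_num)).comp
      tendsto_natCast_atTop_atTop
    refine this.congr fun n => ?_
    norm_num
  refine h.congr' ?_
  filter_upwards [eventually_ge_atTop 1] with n hn
  have hn0 : (0 : ℝ) < (n : ℝ) := by positivity
  rw [← Real.rpow_neg_one (n : ℝ), ← Real.rpow_add hn0]
  norm_num

lemma numGroups_one (β : ℝ) (n : ℕ) : numGroups β 1 n = ⌊β * n⌋₊ := by
  rw [numGroups, Real.rpow_one]

lemma L_m (β : ℝ) (hβ : 0 < β) : Tendsto (fun n => numGroups β 1 n) atTop atTop := by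
  have h : Tendsto (fun n : ℕ => β * n) atTop atTop :=
    (tendsto_natCast_atTop_atTop (R := ℝ)).const_mul_atTop hβ
  have := (tendsto_nat_floor_atTop (α := ℝ)).comp h
  refine this.congr fun n => ?_
  simp [numGroups_one]

lemma L_mdiv (β : ℝ) (hβ : 0 < β) :
    Tendsto (fun n : ℕ => (numGroups β 1 n : ℝ) * (n : ℝ)⁻¹) atTop (𝓝 β) := by
  have hlow : Tendsto (fun n : ℕ => β - (n : ℝ)⁻¹) atTop (𝓝 β) := by
    simpa using tendsto_const_nhds.sub tendsto_inv_nat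
  refine tendsto_of_tendsto_of_tendsto_of_le_of_le' hlow tendsto_const_nhds ?_ ?_
  · filter_upwards [eventually_ge_atTop 1] with n hn
    have hn0 : (0 : ℝ) < (n : ℝ) := by exact_mod_cast hn
    have h1 : β * n - 1 ≤ (⌊β * (n : ℝ)⌋₊ : ℝ) := (Nat.sub_one_lt_floor _).le
    have hne : (n : ℝ) ≠ 0 := ne_of_gt hn0
    rw [numGroups_one]
    calc β - (n : ℝ)⁻¹ = (β * n - 1) * (n : ℝ)⁻¹ := by field_simp
      _ ≤ (⌊β * (n : ℝ)⌋₊ : ℝ) * (n : ℝ)⁻¹ :=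
          mul_le_mul_of_nonneg_right h1 (by positivity)
  · filter_upwards [eventually_ge_atTop 1] with n hn
    have hn0 : (0 : ℝ) < (n : ℝ) := by exact_mod_cast hn
    rw [numGroups_one]
    have h2 : (⌊β * (n : ℝ)⌋₊ : ℝ) ≤ β * n := Nat.floor_le (by positivity)
    calc (⌊β * (n : ℝ)⌋₊ : ℝ) * (n : ℝ)⁻¹ ≤ (β * n) * (n : ℝ)⁻¹ :=
          mul_le_mul_of_nonneg_right h2 (by positivity)
      _ = β := by field_simp

lemma factor_tendsto (β γ w : ℝ) (hβ : 0 < β) (i : ℕ) :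
    Tendsto (fun n : ℕ => ((numGroups β 1 n - i : ℕ) : ℝ) * (γ * w * (n : ℝ)⁻¹)) atTop
      (𝓝 (β * γ * w)) := by
  have h : Tendsto (fun n : ℕ =>
      ((numGroups β 1 n : ℝ) * (n : ℝ)⁻¹) * (γ * w) - (i : ℝ) * (γ * w) * (n : ℝ)⁻¹) atTop
      (𝓝 (β * (γ * w) - (i : ℝ) * (γ * w) * 0)) :=
    ((L_mdiv β hβ).mul_const _).sub (tendsto_const_nhds.mul tendsto_inv_nat)
  rw [show β * (γ * w) - (i : ℝ) * (γ * w) * 0 = β * γ * w by ring] at h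
  refine h.congr' ?_
  filter_upwards [(L_m β hβ).eventually_ge_atTop i] with n hn
  rw [Nat.cast_sub hn]
  ring

/-- Integral of a product of identical single-coordinate functions over a finite
power of a probability measure. -/
lemma integral_pi_prod_const (μ : Measure ℝ) [IsProbabilityMeasure μ] (f : ℝ → ℝ) :
    ∀ k : ℕ, ∫ y : Fin k → ℝ, ∏ i, f (y i) ∂(Measure.pi fun _ => μ) = (∫ x, f x ∂μ) ^ k
  | 0 => by
    simp only [Finset.univ_eq_empty, Finset.prod_empty, pow_zero, integral_const,
      measure_univ, ENNReal.toReal_one, probReal_univ, smul_eq_mul, mul_one]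
  | (k + 1) => by
    calc ∫ y : Fin (k + 1) → ℝ, ∏ i, f (y i) ∂(Measure.pi fun _ => μ)
        = ∫ z : ℝ × (Fin k → ℝ), f z.1 * ∏ i : Fin k, f (z.2 i)
            ∂(μ.prod (Measure.pi fun _ => μ)) := by
          rw [← ((measurePreserving_piFinSuccAbove (fun _ : Fin (k + 1) => μ) 0).symm).integral_comp']
          refine integral_congr_ae (Filter.Eventually.of_forall fun z => ?_)
          simp only [MeasurableEquiv.piFinSuccAbove_symm_apply, Fin.insertNthEquiv,
            Fin.prod_univ_succ, Fin.insertNth_zero, Equiv.coe_fn_mk, Fin.cons_succ,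
            Fin.zero_succAbove, Fin.cons_zero, cast_eq]
      _ = (∫ x, f x ∂μ) * (∫ x, f x ∂μ) ^ k := by
          rw [integral_prod_mul (f := f) (g := fun y : Fin k → ℝ => ∏ i, f (y i)), integral_pi_prod_const μ f k]
      _ = (∫ x, f x ∂μ) ^ (k + 1) := (pow_succ' _ _).symm

end GFAux
namespace GFAux
open Topology
set_option linter.unusedVariables false
set_option linter.unusedSectionVars false

lemma pw_eq (γ : ℝ) (n : ℕ) (w : ℝ) : pw γ 1 n w = min (γ * w * (n : ℝ)⁻¹) 1 := by
  rw [pw, show (-(1 + 1) / 2 : ℝ) = -1 by norm_num, Real.rpow_neg_one]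

lemma pw_nonneg {γ w : ℝ} (hγ : 0 ≤ γ) (hw : 0 ≤ w) (n : ℕ) : 0 ≤ pw γ 1 n w := by
  rw [pw_eq]
  exact le_min (by positivity) zero_le_one

lemma pw_le_one (γ : ℝ) (n : ℕ) (w : ℝ) : pw γ 1 n w ≤ 1 := min_le_right _ _

lemma integral_prod_reduce {m K : ℕ} (P : Measure (Fin (m + 1))) [IsProbabilityMeasure P]
    (F : Measure ℝ) [IsProbabilityMeasure F] (hFpos : F (Set.Iic 0) = 0)
    (c : Fin (m + 1) → ℝ) (hc : ∀ k, c k ≤ 0) (n : ℕ) :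
    ∫ z : Fin (m + 1) × (Fin K → ℝ), ∏ i : Fin K, Real.exp (c z.1 * trunc n (z.2 i))
        ∂(P.prod (Measure.pi fun _ => F))
      = ∑ k : Fin (m + 1), (P {k}).toReal * (∫ x, Real.exp (c k * trunc n x) ∂F) ^ K := by
  have hmeas : Measurable (fun z : Fin (m + 1) × (Fin K → ℝ) =>
      ∏ i : Fin K, Real.exp (c z.1 * trunc n (z.2 i))) := by
    refine Finset.measurable_prod _ fun i _ => ?_
    exact Real.measurable_exp.comp
      (((Measurable.of_discrete (f := c)).comp measurable_fst).mul
        ((measurable_trunc n).comp ((measurable_pi_apply i).comp measurable_snd)))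
  have haeB : (Measure.pi fun _ : Fin K => F) {y | ¬ ∀ i, 0 < y i} = 0 := by
    refine measure_mono_null (fun y hy => ?_)
      (measure_iUnion_null (s := fun i : Fin K => Function.eval i ⁻¹' Set.Iic 0)
        fun i : Fin K => Measure.pi_eval_preimage_null _ hFpos)
    simp only [Set.mem_setOf_eq, not_forall, not_lt] at hy
    obtain ⟨i, hi⟩ := hy
    exact Set.mem_iUnion.mpr ⟨i, Set.mem_Iic.mpr hi⟩
  have hae : ∀ᵐ z ∂(P.prod (Measure.pi fun _ : Fin K => F)), ∀ i, 0 < z.2 i := by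
    rw [ae_iff]
    refine measure_mono_null (fun z hz => ?_)
      (?_ : (P.prod (Measure.pi fun _ : Fin K => F))
        (Set.univ ×ˢ {y | ¬ ∀ i, 0 < y i}) = 0)
    · exact Set.mem_prod.mpr ⟨Set.mem_univ _, hz⟩
    · rw [Measure.prod_prod, haeB, mul_zero]
  have hbound : ∀ᵐ z ∂(P.prod (Measure.pi fun _ : Fin K => F)),
      ‖∏ i : Fin K, Real.exp (c z.1 * trunc n (z.2 i))‖ ≤ 1 := by
    refine hae.mono fun z hz => ?_
    rw [Real.norm_eq_abs, abs_of_nonneg (Finset.prod_nonneg fun i _ => Real.exp_nonneg _)]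
    exact Finset.prod_le_one (fun i _ => Real.exp_nonneg _) fun i _ =>
      Real.exp_le_one_iff.mpr
        (mul_nonpos_of_nonpos_of_nonneg (hc _) (trunc_nonneg (hz i).le))
  have hInt : Integrable (fun z : Fin (m + 1) × (Fin K → ℝ) =>
      ∏ i : Fin K, Real.exp (c z.1 * trunc n (z.2 i)))
      (P.prod (Measure.pi fun _ : Fin K => F)) :=
    Integrable.mono' (integrable_const 1) hmeas.aestronglyMeasurable hbound
  rw [integral_prod _ hInt]
  have hinner : ∀ k : Fin (m + 1),
      ∫ y : Fin K → ℝ, ∏ i : Fin K, Real.exp (c k * trunc n (y i))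
          ∂(Measure.pi fun _ => F)
        = (∫ x, Real.exp (c k * trunc n x) ∂F) ^ K :=
    fun k => integral_pi_prod_const F (fun x => Real.exp (c k * trunc n x)) K
  calc ∫ k, (∫ y : Fin K → ℝ, ∏ i : Fin K, Real.exp (c k * trunc n (y i))
          ∂(Measure.pi fun _ => F)) ∂P
      = ∫ k, (∫ x, Real.exp (c k * trunc n x) ∂F) ^ K ∂P := by
        exact integral_congr_ae (Filter.Eventually.of_forall fun k => hinner k)
    _ = ∑ k : Fin (m + 1), (P {k}).toReal * (∫ x, Real.exp (c k * trunc n x) ∂F) ^ K := by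
        rw [integral_fintype (Integrable.of_finite)]
        simp [smul_eq_mul, Measure.real]

lemma binomial_toReal {p : ℝ} (hp0 : 0 ≤ p) (hp1 : Real.toNNReal p ≤ 1) (m : ℕ)
    (k : Fin (m + 1)) :
    ((PMF.binomial (Real.toNNReal p) hp1 m) k).toReal
      = (m.choose (k : ℕ) : ℝ) * p ^ (k : ℕ) * (1 - p) ^ (m - (k : ℕ)) := by
  have hp1' : p ≤ 1 := Real.toNNReal_le_one.mp hp1
  rw [PMF.binomial_apply]
  simp only [Fin.val_last]
  rw [show ((1 : ENNReal) - ((Real.toNNReal p : NNReal) : ENNReal))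
      = ((1 - Real.toNNReal p : NNReal) : ENNReal) by rw [ENNReal.coe_sub, ENNReal.coe_one]]
  rw [ENNReal.toReal_mul, ENNReal.toReal_mul, ENNReal.toReal_pow, ENNReal.toReal_pow,
    ENNReal.coe_toReal, ENNReal.coe_toReal, NNReal.coe_sub hp1, Real.coe_toNNReal _ hp0]
  simp
  ring

lemma genFun_eq_tsum (β γ : ℝ) (hγ : 0 < γ) (F : Measure ℝ) [IsProbabilityMeasure F]
    (hFpos : F (Set.Iic 0) = 0) (w t : ℝ) (hw : 0 < w) (ht1 : t ≤ 1) (n : ℕ) :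
    genFun 1 β γ F n w t = ∑' k : ℕ, A β γ F w t n k := by
  have hc : ∀ k : Fin (numGroups β 1 n + 1), cc γ t n (k : ℕ) ≤ 0 :=
    fun k => cc_nonpos hγ ht1 n _
  have step1 : genFun 1 β γ F n w t
      = ∑ k : Fin (numGroups β 1 n + 1),
          (((PMF.binomial (Real.toNNReal (pw γ 1 n w))
              (Real.toNNReal_le_one.mpr (min_le_right _ _)) (numGroups β 1 n)) k).toReal *
            phi F n (cc γ t n (k : ℕ)) ^ (n - 1)) := by
    have hfun : (fun x : Fin (numGroups β 1 n + 1) × (Fin (n - 1) → ℝ) =>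
        Real.exp ((t - 1) * ((x.1 : ℕ) : ℝ) *
          ∑ i : Fin (n - 1), γ * trunc n (x.2 i) * (n : ℝ) ^ (-(1 + 1) / 2 : ℝ)))
        = fun x => ∏ i : Fin (n - 1),
            Real.exp (cc γ t n (x.1 : ℕ) * trunc n (x.2 i)) := by
      funext x
      rw [← Real.exp_sum, Finset.mul_sum]
      congr 1
      refine Finset.sum_congr rfl fun i _ => ?_
      rw [show (-(1 + 1) / 2 : ℝ) = -1 by norm_num, Real.rpow_neg_one, cc]
      ring
    calc genFun 1 β γ F n w t
        = ∫ z : Fin (numGroups β 1 n + 1) × (Fin (n - 1) → ℝ),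
            ∏ i : Fin (n - 1), Real.exp (cc γ t n (z.1 : ℕ) * trunc n (z.2 i))
            ∂(((PMF.binomial (Real.toNNReal (pw γ 1 n w))
                (Real.toNNReal_le_one.mpr (min_le_right _ _))
                (numGroups β 1 n)).toMeasure).prod
              (Measure.pi fun _ : Fin (n - 1) => F)) := by
          unfold genFun; rw [hfun]
      _ = ∑ k : Fin (numGroups β 1 n + 1),
            ((((PMF.binomial (Real.toNNReal (pw γ 1 n w))
                (Real.toNNReal_le_one.mpr (min_le_right _ _))
                (numGroups β 1 n)).toMeasure) {k}).toReal *
              (∫ x, Real.exp (cc γ t n (k : ℕ) * trunc n x) ∂F) ^ (n - 1)) :=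
          integral_prod_reduce _ F hFpos (fun a : Fin (numGroups β 1 n + 1) =>
            cc γ t n (a : ℕ)) hc n
      _ = _ := Finset.sum_congr rfl fun k _ => by
          rw [PMF.toMeasure_apply_singleton _ _ (measurableSet_singleton _)]
          rfl
  rw [step1]
  have hval : ∀ k : Fin (numGroups β 1 n + 1),
      (((PMF.binomial (Real.toNNReal (pw γ 1 n w))
          (Real.toNNReal_le_one.mpr (min_le_right _ _)) (numGroups β 1 n)) k).toReal *
        phi F n (cc γ t n (k : ℕ)) ^ (n - 1)) = A β γ F w t n (k : ℕ) := by
    intro k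
    rw [binomial_toReal (pw_nonneg hγ.le hw.le n) _ _ k, A, if_pos (Nat.lt_succ_iff.mp k.isLt)]
  rw [Finset.sum_congr rfl fun k _ => hval k]
  rw [Fin.sum_univ_eq_sum_range (fun k => A β γ F w t n k) (numGroups β 1 n + 1)]
  refine (tsum_eq_sum fun k hk => ?_).symm
  rw [Finset.mem_range, not_lt] at hk
  rw [A, if_neg (by omega)]

end GFAux
namespace GFAux
open Topology
set_option linter.unusedVariables false
set_option linter.unusedSectionVars false
set_option maxHeartbeats 1000000

lemma A_tendsto (β γ : ℝ) (hβ : 0 < β) (hγ : 0 < γ) (F : Measure ℝ) [IsProbabilityMeasure F]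
    (hFpos : F (Set.Iic 0) = 0) (hFint : Integrable (fun x => x) F) (hFmean : ∫ x, x ∂F = 1)
    (w : ℝ) (hw : 0 < w) (t : ℝ) (ht1 : t ≤ 1) (k : ℕ) :
    Tendsto (fun n => A β γ F w t n k) atTop
      (𝓝 (Real.exp (-(β * γ * w)) * ((β * γ * w) ^ k / (Nat.factorial k : ℝ)) *
        Real.exp (γ * (t - 1)) ^ k)) := by
  have hto : Tendsto (fun n : ℕ => γ * w * (n : ℝ)⁻¹) atTop (𝓝 0) := by
    simpa using tendsto_const_nhds.mul tendsto_inv_nat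
  have hevp : ∀ᶠ n : ℕ in atTop, pw γ 1 n w = γ * w * (n : ℝ)⁻¹ := by
    filter_upwards [hto.eventually (eventually_le_nhds zero_lt_one)] with n h1
    rw [pw_eq]
    exact min_eq_left h1
  have hppos : ∀ᶠ n : ℕ in atTop, 0 < γ * w * (n : ℝ)⁻¹ := by
    filter_upwards [eventually_ge_atTop 1] with n hn
    have : (0 : ℝ) < (n : ℝ) := by exact_mod_cast hn
    positivity
  -- B1 : choose * p^k
  have hB1 : Tendsto (fun n => ((numGroups β 1 n).choose k : ℝ) * pw γ 1 n w ^ k) atTop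
      (𝓝 ((β * γ * w) ^ k / (Nat.factorial k : ℝ))) := by
    have hprod : Tendsto (fun n : ℕ =>
        (∏ i ∈ Finset.range k, (((numGroups β 1 n - i : ℕ) : ℝ) * (γ * w * (n : ℝ)⁻¹))) /
          (Nat.factorial k : ℝ)) atTop (𝓝 ((β * γ * w) ^ k / (Nat.factorial k : ℝ))) := by
      apply Tendsto.div_const
      have := tendsto_finset_prod (f := fun (i : ℕ) (n : ℕ) =>
          ((numGroups β 1 n - i : ℕ) : ℝ) * (γ * w * (n : ℝ)⁻¹)) (Finset.range k)
        (fun i _ => factor_tendsto β γ w hβ i)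
      simpa [Finset.prod_const, Finset.card_range] using this
    refine hprod.congr' ?_
    filter_upwards [hevp, (L_m β hβ).eventually_ge_atTop k] with n hp hk
    rw [hp, Finset.prod_mul_distrib, Finset.prod_const, Finset.card_range]
    have hcast : (∏ i ∈ Finset.range k, ((numGroups β 1 n - i : ℕ) : ℝ))
        = ((numGroups β 1 n).descFactorial k : ℝ) := by
      rw [Nat.descFactorial_eq_prod_range]
      push_cast
      rfl
    rw [hcast, Nat.descFactorial_eq_factorial_mul_choose]
    have hfac : (0 : ℝ) < (Nat.factorial k : ℝ) := by exact_mod_cast k.factorial_pos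
    have hfne : (Nat.factorial k : ℝ) ≠ 0 := ne_of_gt hfac
    push_cast
    rw [div_eq_iff hfne]
    ring
  -- B2 : (1-p)^(m-k)
  have hB2 : Tendsto (fun n => (1 - pw γ 1 n w) ^ (numGroups β 1 n - k)) atTop
      (𝓝 (Real.exp (-(β * γ * w)))) := by
    refine aux_pow_exp ?_ ?_ ?_
    · filter_upwards [hevp, hppos, hto.eventually (eventually_lt_nhds zero_lt_one)]
        with n hp h0 h1
      constructor
      · rw [hp]; linarith
      · rw [hp]; intro habs; nlinarith
    · have h1 : Tendsto (fun _ : ℕ => (1 : ℝ)) atTop (𝓝 1) := tendsto_const_nhds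
      have := h1.sub hto
      rw [sub_zero] at this
      exact this.congr' (hevp.mono fun n hp => by simp only [hp])
    · have := (factor_tendsto β γ w hβ k).neg
      refine this.congr' ?_
      filter_upwards [hevp, (L_m β hβ).eventually_ge_atTop k] with n hp hk
      rw [hp]
      ring
  -- B3 : phi ^ (n-1)
  have hB3 : Tendsto (fun n => phi F n (cc γ t n k) ^ (n - 1)) atTop
      (𝓝 (Real.exp (γ * (t - 1)) ^ k)) := by
    by_cases hdeg : t = 1 ∨ k = 0
    · have hcc0 : ∀ n : ℕ, cc γ t n k = 0 := by
        intro n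
        rcases hdeg with h | h <;> simp [cc, h]
      have hphi1 : ∀ n : ℕ, phi F n (cc γ t n k) = 1 := by
        intro n
        simp [phi, hcc0 n]
      have hval : Real.exp (γ * (t - 1)) ^ k = 1 := by
        rcases hdeg with h | h <;> simp [h]
      rw [hval]
      exact tendsto_const_nhds.congr fun n => by rw [hphi1 n, one_pow]
    · push_neg at hdeg
      obtain ⟨ht1', hk0⟩ := hdeg
      have htlt : t < 1 := lt_of_le_of_ne ht1 ht1'
      have hk1 : (0 : ℝ) < (k : ℝ) := by
        have := Nat.one_le_iff_ne_zero.mpr hk0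
        exact_mod_cast Nat.lt_of_lt_of_le Nat.zero_lt_one this
      set Kc := (t - 1) * k * γ with hKc
      have hKneg : Kc < 0 :=
        mul_neg_of_neg_of_pos (mul_neg_of_neg_of_pos (by linarith) hk1) hγ
      have hcceq : ∀ n : ℕ, cc γ t n k = Kc * (n : ℝ)⁻¹ := fun n => rfl
      have hc0 : Tendsto (fun n : ℕ => cc γ t n k) atTop (𝓝 0) := by
        have := tendsto_inv_nat.const_mul Kc
        rw [mul_zero] at this
        exact this.congr fun n => (hcceq n).symm
      have hcb0 : Tendsto (fun n : ℕ => |cc γ t n k| * (n : ℝ) ^ ((1 : ℝ) / 4)) atTop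
          (𝓝 0) := by
        have h := L_q.const_mul |Kc|
        rw [mul_zero] at h
        refine h.congr fun n => ?_
        have habs : |cc γ t n k| = |Kc| * (n : ℝ)⁻¹ := by
          rw [hcceq n, abs_mul, abs_inv, Nat.abs_cast]
        rw [habs]
        ring
      have hen := en_tendsto (F := F) hFint hFmean
      have hcle : ∀ n : ℕ, cc γ t n k ≤ 0 := fun n => cc_nonpos hγ ht1 n k
      have hz : Tendsto (fun n : ℕ => phi F n (cc γ t n k)) atTop (𝓝 1) := by
        refine tendsto_of_tendsto_of_tendsto_of_le_of_le'
          (g := fun n : ℕ => 1 + cc γ t n k * en F n) ?_ tendsto_const_nhds ?_ ?_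
        · have h1 : Tendsto (fun _ : ℕ => (1 : ℝ)) atTop (𝓝 1) := tendsto_const_nhds
          have := h1.add (hc0.mul hen)
          rw [zero_mul, add_zero] at this
          exact this
        · exact Filter.Eventually.of_forall fun n => phi_lower hFpos hFint (hcle n)
        · exact Filter.Eventually.of_forall fun n => phi_le_one hFpos (hcle n)
      have hev_upper : ∀ᶠ n : ℕ in atTop, phi F n (cc γ t n k)
          ≤ 1 + cc γ t n k * en F n
            + (cc γ t n k) ^ 2 * (n : ℝ) ^ ((1 : ℝ) / 4) * en F n := by
        filter_upwards [hcb0.eventually (eventually_le_nhds zero_lt_one)] with n hb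
        exact phi_upper hFpos hFint (hcle n) hb
      have hccneg : ∀ᶠ n : ℕ in atTop, cc γ t n k < 0 := by
        filter_upwards [eventually_ge_atTop 1] with n hn
        have hn0 : (0 : ℝ) < (n : ℝ) := by exact_mod_cast hn
        rw [hcceq]
        exact mul_neg_of_neg_of_pos hKneg (inv_pos.mpr hn0)
      have hz01 : ∀ᶠ n : ℕ in atTop,
          0 < phi F n (cc γ t n k) ∧ phi F n (cc γ t n k) ≠ 1 := by
        filter_upwards [hz.eventually (eventually_gt_nhds zero_lt_one), hev_upper,
          hcb0.eventually (eventually_lt_nhds one_half_pos), hccneg,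
          hen.eventually (eventually_gt_nhds (by norm_num : (1:ℝ)/2 < 1)),
          eventually_ge_atTop 1] with n hpos hup hb hcn hen2 hn
        refine ⟨hpos, ne_of_lt ?_⟩
        have hq0 : (0 : ℝ) ≤ (n : ℝ) ^ ((1 : ℝ) / 4) := by positivity
        have habs : |cc γ t n k| = -(cc γ t n k) := abs_of_neg hcn
        rw [habs] at hb
        -- cc * q > -(1/2)
        have h1 : cc γ t n k * (n : ℝ) ^ ((1 : ℝ) / 4) > -(1 / 2) := by nlinarith
        have h2 : cc γ t n k * en F n < 0 := mul_neg_of_neg_of_pos hcn (by linarith)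
        nlinarith
      have hmul : Tendsto (fun n : ℕ => ((n - 1 : ℕ) : ℝ) * (phi F n (cc γ t n k) - 1))
          atTop (𝓝 ((k : ℝ) * (γ * (t - 1)))) := by
        have hlow : Tendsto (fun n : ℕ => ((n - 1 : ℕ) : ℝ) * (cc γ t n k * en F n)) atTop
            (𝓝 ((k : ℝ) * (γ * (t - 1)))) := by
          have h := (L_ratio.const_mul Kc).mul hen
          rw [mul_one, show Kc * 1 = (k : ℝ) * (γ * (t - 1)) by rw [hKc]; ring] at h
          refine h.congr fun n => ?_
          rw [hcceq]
          ring
        have hextra : Tendsto (fun n : ℕ =>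
            ((n - 1 : ℕ) : ℝ) * ((cc γ t n k) ^ 2 * (n : ℝ) ^ ((1 : ℝ) / 4) * en F n)) atTop
            (𝓝 0) := by
          have h := ((L_ratio.const_mul (Kc ^ 2)).mul L_q).mul hen
          simp only [mul_one, mul_zero] at h
          refine h.congr fun n => ?_
          rw [hcceq]
          ring
        have hupper := hlow.add hextra
        rw [add_zero] at hupper
        refine tendsto_of_tendsto_of_tendsto_of_le_of_le' hlow hupper ?_ ?_
        · refine Filter.Eventually.of_forall fun n => ?_
          have h := phi_lower (F := F) (n := n) hFpos hFint (hcle n)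
          have hcast : (0 : ℝ) ≤ ((n - 1 : ℕ) : ℝ) := Nat.cast_nonneg _
          have := mul_le_mul_of_nonneg_left (by linarith : cc γ t n k * en F n
            ≤ phi F n (cc γ t n k) - 1) hcast
          linarith
        · filter_upwards [hev_upper] with n hup
          have hcast : (0 : ℝ) ≤ ((n - 1 : ℕ) : ℝ) := Nat.cast_nonneg _
          have := mul_le_mul_of_nonneg_left (by linarith : phi F n (cc γ t n k) - 1
            ≤ cc γ t n k * en F n + (cc γ t n k) ^ 2 * (n : ℝ) ^ ((1 : ℝ) / 4) * en F n) hcast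
          calc ((n - 1 : ℕ) : ℝ) * (phi F n (cc γ t n k) - 1)
              ≤ ((n - 1 : ℕ) : ℝ) * (cc γ t n k * en F n
                + (cc γ t n k) ^ 2 * (n : ℝ) ^ ((1 : ℝ) / 4) * en F n) := this
            _ = ((n - 1 : ℕ) : ℝ) * (cc γ t n k * en F n)
                + ((n - 1 : ℕ) : ℝ) * ((cc γ t n k) ^ 2 * (n : ℝ) ^ ((1 : ℝ) / 4) * en F n) := by
                ring
      have h := aux_pow_exp hz01 hz hmul
      rw [Real.exp_nat_mul] at h
      exact h
  -- combine
  have hABC := (hB1.mul hB2).mul hB3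
  rw [show Real.exp (-(β * γ * w)) * ((β * γ * w) ^ k / (Nat.factorial k : ℝ)) *
      Real.exp (γ * (t - 1)) ^ k
    = ((β * γ * w) ^ k / (Nat.factorial k : ℝ)) * Real.exp (-(β * γ * w)) *
      Real.exp (γ * (t - 1)) ^ k by ring]
  refine hABC.congr' ?_
  filter_upwards [(L_m β hβ).eventually_ge_atTop k] with n hk
  rw [A, if_pos hk]

lemma A_bound (β γ : ℝ) (hβ : 0 < β) (hγ : 0 < γ) (F : Measure ℝ) [IsProbabilityMeasure F]
    (hFpos : F (Set.Iic 0) = 0) (w t : ℝ) (hw : 0 < w) (ht1 : t ≤ 1) :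
    ∀ᶠ n : ℕ in atTop, ∀ k : ℕ,
      ‖A β γ F w t n k‖ ≤ (β * γ * w) ^ k / (Nat.factorial k : ℝ) := by
  filter_upwards [eventually_ge_atTop 1] with n hn k
  have hn0 : (0 : ℝ) < (n : ℝ) := by exact_mod_cast hn
  have hfac : (0 : ℝ) < (Nat.factorial k : ℝ) := by exact_mod_cast k.factorial_pos
  by_cases hk : k ≤ numGroups β 1 n
  swap
  · rw [A, if_neg hk]
    simp only [norm_zero]
    positivity
  · rw [A, if_pos hk]
    have hp0 : 0 ≤ pw γ 1 n w := pw_nonneg hγ.le hw.le n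
    have hp1 : pw γ 1 n w ≤ 1 := pw_le_one γ n w
    have hphi0 : 0 ≤ phi F n (cc γ t n k) := phi_nonneg n _
    have hphi1 : phi F n (cc γ t n k) ≤ 1 := phi_le_one hFpos (cc_nonpos hγ ht1 n k)
    have hA0 : (0 : ℝ) ≤ ((numGroups β 1 n).choose k : ℝ) * pw γ 1 n w ^ k *
        (1 - pw γ 1 n w) ^ (numGroups β 1 n - k) * phi F n (cc γ t n k) ^ (n - 1) := by
      have := pow_nonneg hp0 k
      have := pow_nonneg (by linarith : (0:ℝ) ≤ 1 - pw γ 1 n w) (numGroups β 1 n - k)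
      have := pow_nonneg hphi0 (n - 1)
      positivity
    rw [Real.norm_eq_abs, abs_of_nonneg hA0]
    have hc1 : phi F n (cc γ t n k) ^ (n - 1) ≤ 1 := pow_le_one₀ hphi0 hphi1
    have hc2 : (1 - pw γ 1 n w) ^ (numGroups β 1 n - k) ≤ 1 :=
      pow_le_one₀ (by linarith) (by linarith)
    have hchoose : (((numGroups β 1 n).choose k : ℕ) : ℝ)
        ≤ ((numGroups β 1 n : ℕ) : ℝ) ^ k / (Nat.factorial k : ℝ) := by
      rw [le_div_iff₀ hfac]
      have h := Nat.descFactorial_le_pow (numGroups β 1 n) k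
      rw [Nat.descFactorial_eq_factorial_mul_choose] at h
      have h' : ((k.factorial * (numGroups β 1 n).choose k : ℕ) : ℝ)
          ≤ (((numGroups β 1 n) ^ k : ℕ) : ℝ) := Nat.cast_le.mpr h
      push_cast at h'
      linarith
    have hpw : pw γ 1 n w ≤ γ * w * (n : ℝ)⁻¹ := by
      rw [pw_eq]
      exact min_le_left _ _
    have hmain : ((numGroups β 1 n : ℕ) : ℝ) * (γ * w * (n : ℝ)⁻¹) ≤ β * γ * w := by
      have hfl : ((numGroups β 1 n : ℕ) : ℝ) ≤ β * n := by
        rw [numGroups_one]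
        exact Nat.floor_le (by positivity)
      calc ((numGroups β 1 n : ℕ) : ℝ) * (γ * w * (n : ℝ)⁻¹)
          ≤ (β * n) * (γ * w * (n : ℝ)⁻¹) :=
            mul_le_mul_of_nonneg_right hfl (by positivity)
        _ = β * γ * w * ((n : ℝ) * (n : ℝ)⁻¹) := by ring
        _ = β * γ * w := by rw [mul_inv_cancel₀ (ne_of_gt hn0), mul_one]
    calc ((numGroups β 1 n).choose k : ℝ) * pw γ 1 n w ^ k *
          (1 - pw γ 1 n w) ^ (numGroups β 1 n - k) * phi F n (cc γ t n k) ^ (n - 1)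
        ≤ ((numGroups β 1 n).choose k : ℝ) * pw γ 1 n w ^ k *
          (1 - pw γ 1 n w) ^ (numGroups β 1 n - k) * 1 := by
          apply mul_le_mul_of_nonneg_left hc1
          have := pow_nonneg hp0 k
          have := pow_nonneg (by linarith : (0:ℝ) ≤ 1 - pw γ 1 n w) (numGroups β 1 n - k)
          positivity
      _ ≤ ((numGroups β 1 n).choose k : ℝ) * pw γ 1 n w ^ k * 1 * 1 := by
          apply mul_le_mul_of_nonneg_right _ zero_le_one
          apply mul_le_mul_of_nonneg_left hc2
          have := pow_nonneg hp0 k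
          positivity
      _ = ((numGroups β 1 n).choose k : ℝ) * pw γ 1 n w ^ k := by ring
      _ ≤ (((numGroups β 1 n : ℕ) : ℝ) ^ k / (Nat.factorial k : ℝ)) *
            (γ * w * (n : ℝ)⁻¹) ^ k := by
          apply mul_le_mul hchoose (pow_le_pow_left₀ hp0 hpw k) (pow_nonneg hp0 k)
          positivity
      _ = (((numGroups β 1 n : ℕ) : ℝ) * (γ * w * (n : ℝ)⁻¹)) ^ k /
            (Nat.factorial k : ℝ) := by
          rw [mul_pow]
          ring
      _ ≤ (β * γ * w) ^ k / (Nat.factorial k : ℝ) := by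
          have hX0 : (0 : ℝ) ≤ ((numGroups β 1 n : ℕ) : ℝ) * (γ * w * (n : ℝ)⁻¹) := by
            positivity
          have hkk := pow_le_pow_left₀ hX0 hmain k
          gcongr
end GFAux
/-- For `α = 1` and `m = ⌊β n⌋`: if the weights are i.i.d. with law `F` of mean `1` and,
conditionally on `W_1 = w`, `N` is binomial with parameters `m` and
`p_1 = min(γ w n⁻¹, 1)`, independent of the truncated weights, then for every
`t ∈ [0,1]`, `E[e^{(t-1) N Σ_{i=2}^n p_i'} | W_1 = w] → exp(βγw(e^{γ(t-1)} - 1))` as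
`n → ∞`, the generating function of a compound Poisson distribution: a Poisson(`βγw`)
sum of independent Poisson(`γ`) variables. -/
theorem genFun_limit_alpha_eq_one (β γ : ℝ) (hβ : 0 < β) (hγ : 0 < γ)
    (F : Measure ℝ) [IsProbabilityMeasure F]
    (hFpos : F (Set.Iic 0) = 0)
    (hFint : Integrable (fun x => x) F) (hFmean : ∫ x, x ∂F = 1) :
    ∀ w : ℝ, 0 < w → ∀ t : ℝ, t ∈ Set.Icc (0 : ℝ) 1 →
      Tendsto (fun n => genFun 1 β γ F n w t) atTop
        (nhds (Real.exp (β * γ * w * (Real.exp (γ * (t - 1)) - 1)))) := by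
  intro w hw t ht
  obtain ⟨ht0, ht1⟩ := ht
  have hcongr : ∀ n : ℕ, genFun 1 β γ F n w t = ∑' k : ℕ, GFAux.A β γ F w t n k :=
    fun n => GFAux.genFun_eq_tsum β γ hγ F hFpos w t hw ht1 n
  have hlim := tendsto_tsum_of_dominated_convergence
    (f := fun (n : ℕ) (k : ℕ) => GFAux.A β γ F w t n k)
    (g := fun k => Real.exp (-(β * γ * w)) * ((β * γ * w) ^ k / (Nat.factorial k : ℝ)) *
      Real.exp (γ * (t - 1)) ^ k)
    (bound := fun k => (β * γ * w) ^ k / (Nat.factorial k : ℝ))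
    (Real.summable_pow_div_factorial _)
    (fun k => GFAux.A_tendsto β γ hβ hγ F hFpos hFint hFmean w hw t ht1 k)
    (GFAux.A_bound β γ hβ hγ F hFpos w t hw ht1)
  have hsum : (∑' k : ℕ, Real.exp (-(β * γ * w)) * ((β * γ * w) ^ k / (Nat.factorial k : ℝ)) *
      Real.exp (γ * (t - 1)) ^ k) = Real.exp (β * γ * w * (Real.exp (γ * (t - 1)) - 1)) := by
    have h1 : ∀ k : ℕ, Real.exp (-(β * γ * w)) * ((β * γ * w) ^ k / (Nat.factorial k : ℝ)) *
        Real.exp (γ * (t - 1)) ^ k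
        = Real.exp (-(β * γ * w)) *
          ((β * γ * w * Real.exp (γ * (t - 1))) ^ k / (Nat.factorial k : ℝ)) := by
      intro k
      rw [mul_pow]
      ring
    rw [tsum_congr h1, tsum_mul_left]
    have h2 : (∑' k : ℕ, (β * γ * w * Real.exp (γ * (t - 1))) ^ k / (Nat.factorial k : ℝ))
        = Real.exp (β * γ * w * Real.exp (γ * (t - 1))) := by
      rw [Real.exp_eq_exp_ℝ]
      exact (congrFun NormedSpace.exp_eq_tsum_div _).symm
    rw [h2, ← Real.exp_add]
    congr 1
    ring
  rw [hsum] at hlim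
  exact hlim.congr fun n => (hcongr n).symm
end
end

section
/- Let λ ≥ 3 be an integer and a > 0 (standing for βγ). Then the clustering c(G) = ((λ−2)^{λ−1}/(λ−1)^{λ−2}) ∫_{(λ−2)/(λ−1)}^∞ (1 + ax)^{-1} x^{-λ} dx admits the closed form c(G) = ((λ−2)^{λ−1}/(λ−1)^{λ−2}) · [ (−a)^{λ−1} ln(1 + (λ−1)/(a(λ−2))) + Σ_{ℓ=1}^{λ−1} ((−a)^{λ−1−ℓ}/ℓ) · ((λ−1)/(λ−2))^ℓ ]. -/
open MeasureTheory Real Finset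

lemma geom_aux (n : ℕ) (a x : ℝ) (hx : x ≠ 0) (hax : (1 : ℝ) + a * x ≠ 0) :
    (∑ k ∈ Finset.range n, (-a) ^ k * x ^ ((k : ℤ) - n - 1)) +
      (-a) ^ n * (x⁻¹ - a / (1 + a * x)) = (1 + a * x)⁻¹ * x ^ (-(n + 1 : ℤ)) := by
  have hS : (1 + a * x) * (∑ k ∈ Finset.range n, (-(a * x)) ^ k)
      = 1 - (-(a * x)) ^ n := by
    have h := geom_sum_mul (-(a * x)) n
    linear_combination -h
  have hcast : (-(n + 1 : ℤ)) = -((n + 1 : ℕ) : ℤ) := by push_cast; ring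
  have hterm : ∀ k ∈ Finset.range n,
      (-a) ^ k * x ^ ((k : ℤ) - n - 1) = (-(a * x)) ^ k * (x ^ (n + 1))⁻¹ := by
    intro k hk
    have h1 : ((k : ℤ) - n - 1) = (k : ℤ) + (-((n + 1 : ℕ) : ℤ)) := by push_cast; ring
    rw [h1, zpow_add₀ hx, zpow_natCast, zpow_neg, zpow_natCast]
    ring
  rw [Finset.sum_congr rfl hterm, ← Finset.sum_mul, hcast, zpow_neg, zpow_natCast]
  have hxp : (x : ℝ) ^ (n + 1) ≠ 0 := pow_ne_zero _ hx
  have hax' : (-(a * x)) ^ n = (-a) ^ n * x ^ n := by rw [neg_mul_eq_neg_mul, mul_pow]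
  field_simp
  linear_combination x * hS - x * hax'

noncomputable def Faux (n : ℕ) (a : ℝ) : ℝ → ℝ := fun y =>
  (∑ k ∈ Finset.range n, (-a) ^ k * y ^ ((k : ℤ) - n) / ((k : ℝ) - n)) +
    (-a) ^ n * (Real.log y - Real.log (1 + a * y))

lemma Faux_deriv (n : ℕ) (a x : ℝ) (hx : 0 < x) (hax : 0 < 1 + a * x) :
    HasDerivAt (Faux n a) ((1 + a * x)⁻¹ * x ^ (-(n + 1 : ℤ))) x := by
  have h1 : HasDerivAt
      (fun y => ∑ k ∈ Finset.range n, (-a) ^ k * y ^ ((k : ℤ) - n) / ((k : ℝ) - n))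
      (∑ k ∈ Finset.range n, (-a) ^ k * x ^ ((k : ℤ) - n - 1)) x := by
    apply HasDerivAt.fun_sum
    intro k hk
    have hk' : k < n := Finset.mem_range.mp hk
    have hkn : (k : ℝ) - n ≠ 0 := by
      have : (k : ℝ) < n := by exact_mod_cast hk'
      linarith
    have h := ((hasDerivAt_zpow ((k : ℤ) - n) x (Or.inl hx.ne')).const_mul
      ((-a) ^ k)).div_const ((k : ℝ) - n)
    convert h using 1
    · rfl
    push_cast
    field_simp
  have hlin : HasDerivAt (fun y : ℝ => 1 + a * y) a x := by
    simpa using ((hasDerivAt_id x).const_mul a).const_add 1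
  have h2 : HasDerivAt (fun y => (-a) ^ n * (Real.log y - Real.log (1 + a * y)))
      ((-a) ^ n * (x⁻¹ - a / (1 + a * x))) x :=
    ((Real.hasDerivAt_log hx.ne').sub (hlin.log hax.ne')).const_mul _
  have h3 := h1.add h2
  rw [← geom_aux n a x hx.ne' hax.ne']
  exact h3

lemma Faux_tendsto (n : ℕ) (a : ℝ) (ha : 0 < a) :
    Filter.Tendsto (Faux n a) Filter.atTop (nhds (-((-a) ^ n * Real.log a))) := by
  have h1 : Filter.Tendsto
      (fun y : ℝ => ∑ k ∈ Finset.range n, (-a) ^ k * y ^ ((k : ℤ) - n) / ((k : ℝ) - n))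
      Filter.atTop (nhds 0) := by
    have : Filter.Tendsto
        (fun y : ℝ => ∑ k ∈ Finset.range n, (-a) ^ k * y ^ ((k : ℤ) - n) / ((k : ℝ) - n))
        Filter.atTop (nhds (∑ k ∈ Finset.range n, (0 : ℝ))) := by
      apply tendsto_finset_sum
      intro k hk
      have hk' : k < n := Finset.mem_range.mp hk
      have hneg : ((k : ℤ) - n) < 0 := by
        have : (k : ℤ) < n := by exact_mod_cast hk'
        omega
      have := ((tendsto_zpow_atTop_zero hneg).const_mul ((-a) ^ k)).div_const ((k : ℝ) - n)
      simpa using this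
    simpa using this
  have h2 : Filter.Tendsto (fun y : ℝ => Real.log y - Real.log (1 + a * y))
      Filter.atTop (nhds (Real.log a⁻¹)) := by
    have hquot : Filter.Tendsto (fun y : ℝ => (y⁻¹ + a)⁻¹) Filter.atTop (nhds a⁻¹) := by
      have : Filter.Tendsto (fun y : ℝ => y⁻¹ + a) Filter.atTop (nhds (0 + a)) :=
        tendsto_inv_atTop_zero.add tendsto_const_nhds
      rw [zero_add] at this
      exact this.inv₀ ha.ne'
    have hlog := (Real.continuousAt_log (by positivity : (a : ℝ)⁻¹ ≠ 0)).tendsto.comp hquot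
    apply hlog.congr'
    filter_upwards [Filter.eventually_gt_atTop (0 : ℝ)] with y hy
    have hay : (0 : ℝ) < 1 + a * y := by positivity
    have : (y⁻¹ + a)⁻¹ = y / (1 + a * y) := by
      field_simp
    simp only [Function.comp_apply, this]
    rw [Real.log_div hy.ne' hay.ne']
  have h := h1.add (h2.const_mul ((-a) ^ n))
  simp only [zero_add] at h
  have heq : -((-a) ^ n * Real.log a) = (-a) ^ n * Real.log a⁻¹ := by
    rw [Real.log_inv]; ring
  rw [heq]
  exact h

lemma final_alg (n : ℕ) (a x0 : ℝ) (ha : 0 < a) (hx0 : 0 < x0) :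
    -((-a) ^ n * Real.log a) - Faux n a x0 =
      (-a) ^ n * Real.log (1 + x0⁻¹ / a) +
        ∑ l ∈ Finset.Icc 1 n, (-a) ^ (n - l) / (l : ℝ) * (x0⁻¹) ^ l := by
  have hax : (0 : ℝ) < 1 + a * x0 := by positivity
  have hlog : Real.log (1 + x0⁻¹ / a)
      = Real.log (1 + a * x0) - Real.log x0 - Real.log a := by
    have h1 : 1 + x0⁻¹ / a = (1 + a * x0) / (x0 * a) := by
      field_simp; ring
    rw [h1, Real.log_div hax.ne' (by positivity), Real.log_mul hx0.ne' ha.ne']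
    ring
  have hsum : (∑ l ∈ Finset.Icc 1 n, (-a) ^ (n - l) / (l : ℝ) * (x0⁻¹) ^ l)
      = -(∑ k ∈ Finset.range n, (-a) ^ k * x0 ^ ((k : ℤ) - n) / ((k : ℝ) - n)) := by
    rw [← Finset.sum_neg_distrib]
    apply Finset.sum_nbij' (i := fun l => n - l) (j := fun k => n - k)
    · intro l hl
      simp only [Finset.mem_Icc] at hl
      simp only [Finset.mem_range]
      omega
    · intro k hk
      simp only [Finset.mem_range] at hk
      simp only [Finset.mem_Icc]
      omega
    · intro l hl
      simp only [Finset.mem_Icc] at hl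
      omega
    · intro k hk
      simp only [Finset.mem_range] at hk
      omega
    · intro l hl
      simp only [Finset.mem_Icc] at hl
      have h1 : n - (n - l) = l := by omega
      have h2 : (((n - l : ℕ) : ℤ) - n) = -(l : ℤ) := by
        have : ((n - l : ℕ) : ℤ) = (n : ℤ) - l := by
          push_cast [Nat.cast_sub hl.2]; ring
        omega
      have h3 : (((n - l : ℕ) : ℝ) - n) = -(l : ℝ) := by
        have : ((n - l : ℕ) : ℝ) = (n : ℝ) - l := by
          push_cast [Nat.cast_sub hl.2]; ring
        linarith [this]
      have h4 : x0 ^ (-(l : ℤ)) = (x0⁻¹) ^ l := by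
        rw [zpow_neg, zpow_natCast, inv_pow]
      have hl0 : (0 : ℝ) < l := by exact_mod_cast hl.1
      rw [h2, h3, h4]
      field_simp
  rw [hsum]
  show -((-a) ^ n * Real.log a) -
      ((∑ k ∈ Finset.range n, (-a) ^ k * x0 ^ ((k : ℤ) - n) / ((k : ℝ) - n)) +
        (-a) ^ n * (Real.log x0 - Real.log (1 + a * x0))) = _
  rw [hlog]
  ring

lemma integrable_aux (n : ℕ) (a x0 : ℝ) (ha : 0 < a) (hx0 : 0 < x0) (hn : 1 ≤ n) :
    IntegrableOn (fun x : ℝ => (1 + a * x)⁻¹ * x ^ (-(n + 1 : ℤ))) (Set.Ioi x0) := by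
  have hexp : -((n : ℝ) + 1) < -1 := by
    have : (1 : ℝ) ≤ n := by exact_mod_cast hn
    linarith
  have hbig : IntegrableOn (fun x : ℝ => x ^ (-((n : ℝ) + 1))) (Set.Ioi x0) :=
    integrableOn_Ioi_rpow_of_lt hexp hx0
  apply MeasureTheory.Integrable.mono hbig
  · apply ContinuousOn.aestronglyMeasurable _ measurableSet_Ioi
    intro x hx
    have hx' : 0 < x := lt_trans hx0 hx
    have hax : (0 : ℝ) < 1 + a * x := by positivity
    exact ((((continuous_const.add (continuous_const.mul continuous_id)).continuousAt).inv₀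
      hax.ne').mul (continuousAt_zpow₀ x _ (Or.inl hx'.ne'))).continuousWithinAt
  · filter_upwards [ae_restrict_mem measurableSet_Ioi] with x hx
    have hx' : 0 < x := lt_trans hx0 hx
    have hax : (0 : ℝ) < 1 + a * x := by positivity
    have hzpos : (0 : ℝ) < x ^ (-(n + 1 : ℤ)) := zpow_pos hx' _
    have hrw : x ^ (-((n : ℝ) + 1)) = x ^ (-(n + 1 : ℤ)) := by
      rw [show -((n : ℝ) + 1) = ((-(n + 1 : ℤ) : ℤ) : ℝ) by push_cast; ring,
        Real.rpow_intCast]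
    rw [Real.norm_eq_abs, Real.norm_eq_abs, hrw, abs_of_pos (by positivity),
      abs_of_pos hzpos]
    have h1 : (1 + a * x)⁻¹ ≤ 1 := by
      rw [inv_le_one_iff₀]
      right
      nlinarith
    nlinarith [hzpos, h1, inv_pos.mpr hax]

/-- Let `λ ≥ 3` be an integer and `a > 0` (standing for `βγ`). Then the clustering
`c(G) = ((λ-2)^{λ-1}/(λ-1)^{λ-2}) ∫_{(λ-2)/(λ-1)}^∞ (1 + ax)⁻¹ x^{-λ} dx` admits the
closed form
`c(G) = ((λ-2)^{λ-1}/(λ-1)^{λ-2}) ·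
  [(-a)^{λ-1} ln(1 + (λ-1)/(a(λ-2))) + Σ_{ℓ=1}^{λ-1} ((-a)^{λ-1-ℓ}/ℓ)·((λ-1)/(λ-2))^ℓ]`. -/
theorem pareto_clustering_integer_exponent (lam : ℕ) (hlam : 3 ≤ lam) (a : ℝ)
    (ha : 0 < a) :
    ((lam : ℝ) - 2) ^ (lam - 1) / ((lam : ℝ) - 1) ^ (lam - 2) *
        ∫ x in Set.Ioi (((lam : ℝ) - 2) / ((lam : ℝ) - 1)),
          (1 + a * x)⁻¹ * x ^ (-(lam : ℝ)) =
      ((lam : ℝ) - 2) ^ (lam - 1) / ((lam : ℝ) - 1) ^ (lam - 2) *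
        ((-a) ^ (lam - 1) * Real.log (1 + ((lam : ℝ) - 1) / (a * ((lam : ℝ) - 2))) +
          ∑ l ∈ Finset.Icc 1 (lam - 1),
            (-a) ^ (lam - 1 - l) / (l : ℝ) * (((lam : ℝ) - 1) / ((lam : ℝ) - 2)) ^ l) := by
  have h3 : (3 : ℝ) ≤ (lam : ℝ) := by exact_mod_cast hlam
  set n := lam - 1 with hn
  have hn2 : 2 ≤ n := by omega
  have hlamn : (lam : ℝ) = (n : ℝ) + 1 := by
    have h : lam = n + 1 := by omega
    rw [h]; push_cast; ring
  have hl1 : (0 : ℝ) < (lam : ℝ) - 1 := by linarith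
  have hl2 : (0 : ℝ) < (lam : ℝ) - 2 := by linarith
  set x0 : ℝ := ((lam : ℝ) - 2) / ((lam : ℝ) - 1) with hx0def
  have hx0 : 0 < x0 := div_pos hl2 hl1
  congr 1
  have hint : (∫ x in Set.Ioi x0, (1 + a * x)⁻¹ * x ^ (-(lam : ℝ)))
      = ∫ x in Set.Ioi x0, (1 + a * x)⁻¹ * x ^ (-(n + 1 : ℤ)) := by
    apply setIntegral_congr_fun measurableSet_Ioi
    intro x hx
    simp only
    congr 1
    rw [show (-(lam : ℝ)) = ((-(n + 1 : ℤ) : ℤ) : ℝ) by rw [hlamn]; push_cast; ring,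
      Real.rpow_intCast]
  rw [hint]
  have key := integral_Ioi_of_hasDerivAt_of_tendsto
    (f := Faux n a) (f' := fun x => (1 + a * x)⁻¹ * x ^ (-(n + 1 : ℤ))) (a := x0)
    ((Faux_deriv n a x0 hx0 (by positivity)).continuousAt.continuousWithinAt)
    (fun x hx => Faux_deriv n a x (lt_trans hx0 hx)
      (by have := lt_trans hx0 hx; positivity))
    (integrable_aux n a x0 ha hx0 (by omega))
    (Faux_tendsto n a ha)
  rw [key, final_alg n a x0 ha hx0]
  have hinv : x0⁻¹ = ((lam : ℝ) - 1) / ((lam : ℝ) - 2) := by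
    rw [hx0def, inv_div]
  rw [hinv]
  have harg : ((lam : ℝ) - 1) / ((lam : ℝ) - 2) / a
      = ((lam : ℝ) - 1) / (a * ((lam : ℝ) - 2)) := by
    rw [div_div, mul_comm]
  rw [harg]
end
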